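/- If (x; x_1,...,x_n) ∈ C, then Cr(x; x_1,...,x_n) ∈ C. -/

import Mathlib

/-- The product `(x; x_i)·(y; y_i) = x*y - ∑ i, x_i * y_i` on `ℝ^{1+(n+3)}`. -/
def dotp {n : ℕ} (x y : ℝ × (Fin (n + 3) → ℝ)) : ℝ :=
  x.1 * y.1 - ∑ i, x.2 i * y.2 i

/-- The vector `-K = (3; 1, 1, …, 1)`. -/
def negK {n : ℕ} : ℝ × (Fin (n + 3) → ℝ) := (3, fun _ => 1)

/-- The Cremona transform. -/
def Cr {n : ℕ} (d : ℝ × (Fin (n + 3) → ℝ)) : ℝ × (Fin (n + 3) → ℝ) :=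
  (2 * d.1 - d.2 0 - d.2 1 - d.2 2,
    fun i =>
      if i = 0 then d.1 - d.2 1 - d.2 2
      else if i = 1 then d.1 - d.2 0 - d.2 2
      else if i = 2 then d.1 - d.2 0 - d.2 1
      else d.2 i)

/-- A vector is positive if all its entries are nonnegative. -/
def PositiveVec {n : ℕ} (d : ℝ × (Fin (n + 3) → ℝ)) : Prop :=
  0 ≤ d.1 ∧ ∀ i, 0 ≤ d.2 i

/-- A vector is ordered if `d_i ≥ d_{i+1}` whenever both are nonzero, and nonzero
entries precede zero entries. -/
def OrderedVec {n : ℕ} (d : ℝ × (Fin (n + 3) → ℝ)) : Prop :=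
  (∀ (i : ℕ) (h1 : i < n + 3) (h2 : i + 1 < n + 3),
      d.2 ⟨i, h1⟩ ≠ 0 → d.2 ⟨i + 1, h2⟩ ≠ 0 → d.2 ⟨i + 1, h2⟩ ≤ d.2 ⟨i, h1⟩) ∧
  (∀ i j : Fin (n + 3), d.2 i ≠ 0 → d.2 j = 0 → i < j)

/-- A vector is reduced if it is positive, ordered, and `d ≥ d_1 + d_2 + d_3`. -/
def ReducedVec {n : ℕ} (d : ℝ × (Fin (n + 3) → ℝ)) : Prop :=
  PositiveVec d ∧ OrderedVec d ∧ d.2 0 + d.2 1 + d.2 2 ≤ d.1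

/-- A vector has integer entries. -/
def IntVec {n : ℕ} (d : ℝ × (Fin (n + 3) → ℝ)) : Prop :=
  (∃ z : ℤ, d.1 = z) ∧ ∀ i, ∃ z : ℤ, d.2 i = z

/-- The set `E` of integer vectors with `(d;d_i)·(d;d_i) ≥ -1` and `-K·(d;d_i) = 1`. -/
def ESet {n : ℕ} : Set (ℝ × (Fin (n + 3) → ℝ)) :=
  {d | IntVec d ∧ -1 ≤ dotp d d ∧ dotp negK d = 1}

/-- The set `C` of integer vectors with `(x;x_i)·(x;x_i) ≥ 0` that pair nonnegatively
with every element of `E`. -/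
def CSet {n : ℕ} : Set (ℝ × (Fin (n + 3) → ℝ)) :=
  {x | IntVec x ∧ 0 ≤ dotp x x ∧ ∀ d ∈ ESet, 0 ≤ dotp x d}


lemma fin_ne01 {n : ℕ} : (0 : Fin (n+3)) ≠ 1 := by simp [Fin.ext_iff]
lemma fin_ne02 {n : ℕ} : (0 : Fin (n+3)) ≠ 2 := by simp [Fin.ext_iff, Nat.mod_eq_of_lt (show 2 < n + 3 by omega)]
lemma fin_ne12 {n : ℕ} : (1 : Fin (n+3)) ≠ 2 := by simp [Fin.ext_iff, Nat.mod_eq_of_lt (show 2 < n + 3 by omega)]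

lemma Cr_fst {n : ℕ} (d : ℝ × (Fin (n + 3) → ℝ)) :
    (Cr d).1 = 2 * d.1 - d.2 0 - d.2 1 - d.2 2 := rfl
lemma Cr2_0 {n : ℕ} (d : ℝ × (Fin (n + 3) → ℝ)) :
    (Cr d).2 0 = d.1 - d.2 1 - d.2 2 := by simp [Cr]
lemma Cr2_1 {n : ℕ} (d : ℝ × (Fin (n + 3) → ℝ)) :
    (Cr d).2 1 = d.1 - d.2 0 - d.2 2 := by simp [Cr, fin_ne01.symm]
lemma Cr2_2 {n : ℕ} (d : ℝ × (Fin (n + 3) → ℝ)) :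
    (Cr d).2 2 = d.1 - d.2 0 - d.2 1 := by simp [Cr, fin_ne02.symm, fin_ne12.symm]
lemma Cr_apply_ne {n : ℕ} (x : ℝ × (Fin (n + 3) → ℝ)) (i : Fin (n+3))
    (h0 : i ≠ 0) (h1 : i ≠ 1) (h2 : i ≠ 2) : (Cr x).2 i = x.2 i := by
  simp [Cr, h0, h1, h2]

lemma sum_split {n : ℕ} (f : Fin (n + 3) → ℝ) :
    ∑ i, f i = f 0 + f 1 + f 2 + ∑ i ∈ (Finset.univ \ {0, 1, 2}), f i := by
  classical
  rw [← Finset.sum_sdiff (Finset.subset_univ ({0,1,2} : Finset (Fin (n+3))))]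
  rw [Finset.sum_insert (by simp [fin_ne01, fin_ne02]),
      Finset.sum_insert (by simp [fin_ne12]), Finset.sum_singleton]
  ring

lemma dotp_Cr {n : ℕ} (x y : ℝ × (Fin (n + 3) → ℝ)) :
    dotp (Cr x) (Cr y) = dotp x y := by
  classical
  unfold dotp
  rw [sum_split (fun i => (Cr x).2 i * (Cr y).2 i), sum_split (fun i => x.2 i * y.2 i)]
  have hs : ∑ i ∈ (Finset.univ \ {0,1,2}), (Cr x).2 i * (Cr y).2 i
      = ∑ i ∈ (Finset.univ \ {0,1,2}), x.2 i * y.2 i := by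
    apply Finset.sum_congr rfl
    intro i hi
    simp only [Finset.mem_sdiff, Finset.mem_insert, Finset.mem_singleton] at hi
    push_neg at hi
    rw [Cr_apply_ne x i hi.2.1 hi.2.2.1 hi.2.2.2,
        Cr_apply_ne y i hi.2.1 hi.2.2.1 hi.2.2.2]
  simp only [hs, Cr_fst, Cr2_0, Cr2_1, Cr2_2]
  ring

lemma Cr_Cr {n : ℕ} (x : ℝ × (Fin (n + 3) → ℝ)) : Cr (Cr x) = x := by
  apply Prod.ext
  · rw [Cr_fst, Cr_fst, Cr2_0, Cr2_1, Cr2_2]; ring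
  funext i
  by_cases h0 : i = 0
  · subst h0; rw [Cr2_0, Cr_fst, Cr2_1, Cr2_2]; ring
  by_cases h1 : i = 1
  · subst h1; rw [Cr2_1, Cr_fst, Cr2_0, Cr2_2]; ring
  by_cases h2 : i = 2
  · subst h2; rw [Cr2_2, Cr_fst, Cr2_0, Cr2_1]; ring
  · rw [Cr_apply_ne _ i h0 h1 h2, Cr_apply_ne _ i h0 h1 h2]

lemma Cr_negK {n : ℕ} : Cr (negK : ℝ × (Fin (n + 3) → ℝ)) = negK := by
  apply Prod.ext
  · rw [Cr_fst]; simp [negK]; norm_num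
  funext i
  by_cases h0 : i = 0
  · subst h0; rw [Cr2_0]; simp [negK]; norm_num
  by_cases h1 : i = 1
  · subst h1; rw [Cr2_1]; simp [negK]; norm_num
  by_cases h2 : i = 2
  · subst h2; rw [Cr2_2]; simp [negK]; norm_num
  · rw [Cr_apply_ne _ i h0 h1 h2]

lemma IntVec_Cr {n : ℕ} (d : ℝ × (Fin (n + 3) → ℝ)) (hd : IntVec d) : IntVec (Cr d) := by
  obtain ⟨⟨z, hz⟩, hzi⟩ := hd
  obtain ⟨z0, h0⟩ := hzi 0
  obtain ⟨z1, h1⟩ := hzi 1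
  obtain ⟨z2, h2⟩ := hzi 2
  constructor
  · exact ⟨2 * z - z0 - z1 - z2, by rw [Cr_fst, hz, h0, h1, h2]; push_cast; ring⟩
  · intro i
    by_cases e0 : i = 0
    · subst e0; exact ⟨z - z1 - z2, by rw [Cr2_0, hz, h1, h2]; push_cast; ring⟩
    by_cases e1 : i = 1
    · subst e1; exact ⟨z - z0 - z2, by rw [Cr2_1, hz, h0, h2]; push_cast; ring⟩
    by_cases e2 : i = 2
    · subst e2; exact ⟨z - z0 - z1, by rw [Cr2_2, hz, h0, h1]; push_cast; ring⟩
    · rw [Cr_apply_ne _ i e0 e1 e2]; exact hzi i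

lemma Cr_mem_ESet {n : ℕ} (d : ℝ × (Fin (n + 3) → ℝ)) (hd : d ∈ ESet) :
    Cr d ∈ ESet := by
  obtain ⟨hint, hself, hK⟩ := hd
  refine ⟨IntVec_Cr d hint, ?_, ?_⟩
  · rw [dotp_Cr]; exact hself
  · calc dotp negK (Cr d) = dotp (Cr negK) (Cr d) := by rw [Cr_negK]
      _ = dotp negK d := dotp_Cr _ _
      _ = 1 := hK

theorem cremona_preserves_C {n : ℕ} (x : ℝ × (Fin (n + 3) → ℝ)) (hx : x ∈ CSet) :
    Cr x ∈ CSet := by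
  obtain ⟨hint, hself, hpair⟩ := hx
  refine ⟨IntVec_Cr x hint, ?_, ?_⟩
  · rw [dotp_Cr]; exact hself
  · intro d hd
    have : dotp (Cr x) d = dotp x (Cr d) := by
      conv_lhs => rw [← Cr_Cr d]
      exact dotp_Cr x (Cr d)
    rw [this]
    exact hpair (Cr d) (Cr_mem_ESet d hd)
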